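/- For every n ≥ 3, the disjunctive total domination number of the cycle C_n equals 2n/5 if n ≡ 0 (mod 5), and equals ⌈2(n+1)/5⌉ otherwise. -/

import Mathlib

open SimpleGraph Finset
open Fin.NatCast

def IsDTDSet {V : Type*} (G : SimpleGraph V) (S : Finset V) : Prop :=
  ∀ v : V, (∃ u ∈ S, G.Adj v u) ∨
    ∃ u ∈ S, ∃ w ∈ S, u ≠ w ∧ G.dist v u = 2 ∧ G.dist v w = 2

noncomputable def dtdNum {V : Type*} (G : SimpleGraph V) : ℕ :=
  sInf {k | ∃ S : Finset V, IsDTDSet G S ∧ S.card = k}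


def cycleG (n : ℕ) : SimpleGraph (Fin n) :=
  SimpleGraph.fromRel (fun a b => ((a : ℕ) + 1) % n = (b : ℕ))

namespace DTD

variable {n : ℕ}

lemma cast_eq_iff [NeZero n] (a b : ℕ) : (a : Fin n) = (b : Fin n) ↔ a % n = b % n := by
  rw [Fin.ext_iff, Fin.val_natCast, Fin.val_natCast]

lemma add_cast_eq_iff [NeZero n] (v : Fin n) (a b : ℕ) :
    v + (a : Fin n) = v + (b : Fin n) ↔ a % n = b % n := by
  rw [add_right_inj, cast_eq_iff]

lemma mod_helper {a b : ℕ} (h : ∃ k, a = b + n * k) : a % n = b % n := by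
  obtain ⟨k, rfl⟩ := h
  rw [Nat.add_mul_mod_self_left]

lemma cast_reduce [NeZero n] {a b : ℕ} (h : ∃ k, a = b + n * k) : (a : Fin n) = (b : Fin n) :=
  (cast_eq_iff a b).mpr (mod_helper h)

lemma cast_add_cast [NeZero n] (a b : ℕ) : (a : Fin n) + (b : Fin n) = ((a + b : ℕ) : Fin n) := by
  rw [Fin.ext_iff, Fin.val_add, Fin.val_natCast, Fin.val_natCast, Fin.val_natCast, Nat.add_mod]
  simp [Nat.mod_mod_of_dvd]

lemma addadd [NeZero n] (v : Fin n) (a b : ℕ) : v + (a : Fin n) + (b : Fin n) = v + ((a + b : ℕ) : Fin n) := by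
  rw [add_assoc, cast_add_cast]

lemma add_cast_zero [NeZero n] (v : Fin n) : v + ((0 : ℕ) : Fin n) = v := by
  simp

lemma add_cast_eq_self [NeZero n] (v : Fin n) {a : ℕ} (h : ∃ k, a = n * k) : v + (a : Fin n) = v := by
  have h2 : (a : Fin n) = ((0 : ℕ) : Fin n) := cast_reduce (by obtain ⟨k, rfl⟩ := h; exact ⟨k, by omega⟩)
  rw [h2, add_cast_zero]

lemma add_cast_ne_self [NeZero n] (v : Fin n) {a : ℕ} (h0 : 0 < a) (h1 : a < n) :
    v + (a : Fin n) ≠ v := by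
  intro h
  nth_rewrite 2 [← add_cast_zero v] at h
  rw [add_cast_eq_iff, Nat.mod_eq_of_lt h1, Nat.zero_mod] at h
  omega

lemma not_dvd_helper (hn : 0 < n) {x : ℕ} (hx : x < 3 * n) (h0 : x ≠ 0) (h1 : x ≠ n)
    (h2 : x ≠ 2 * n) : ¬ n ∣ x := by
  rintro ⟨k, rfl⟩
  have hk : k < 3 := by
    by_contra h
    push_neg at h
    have : n * 3 ≤ n * k := Nat.mul_le_mul_left n h
    omega
  interval_cases k <;> omega

lemma cast_ne_helper [NeZero n] {a b : ℕ} (hab : a ≤ b) (h0 : b - a ≠ 0) (h1 : b - a ≠ n)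
    (h2 : b - a ≠ 2 * n) (hlt : b - a < 3 * n) : (a : Fin n) ≠ (b : Fin n) := by
  intro h
  have := (cast_eq_iff a b).mp h
  have hd : n ∣ b - a := (Nat.modEq_iff_dvd' hab).mp this
  exact not_dvd_helper (Nat.pos_of_ne_zero (NeZero.ne n)) hlt h0 h1 h2 hd

end DTD

namespace DTD2
open DTD

variable {n : ℕ}

lemma adj_iff (hn : 3 ≤ n) (v u : Fin n) :
    haveI : NeZero n := ⟨by omega⟩
    (cycleG n).Adj v u ↔ u = v + ((1 : ℕ) : Fin n) ∨ u = v + ((n - 1 : ℕ) : Fin n) := by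
  haveI : NeZero n := ⟨by omega⟩
  rw [cycleG, SimpleGraph.fromRel_adj]
  have key : ∀ a b : Fin n, ((a : ℕ) + 1) % n = (b : ℕ) ↔ b = a + ((1 : ℕ) : Fin n) := by
    intro a b
    rw [Fin.ext_iff, Fin.val_add, Fin.val_natCast]
    rw [Nat.mod_eq_of_lt (show 1 < n by omega)]
    constructor <;> (intro h; omega)
  constructor
  · rintro ⟨hne, h | h⟩
    · left; exact (key v u).mp h
    · right
      have h2 := (key u v).mp h
      rw [h2, addadd]
      exact (add_cast_eq_self u ⟨1, by omega⟩).symm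
  · have h1 : ∀ w : Fin n, w + ((1:ℕ) : Fin n) ≠ w := fun w =>
      add_cast_ne_self w (by omega) (by omega)
    rintro (rfl | rfl)
    · exact ⟨(h1 v).symm, Or.inl ((key v _).mpr rfl)⟩
    · refine ⟨?_, Or.inr ((key _ v).mpr ?_)⟩
      · exact (add_cast_ne_self v (show 0 < n - 1 by omega) (by omega)).symm
      · rw [addadd]
        exact (add_cast_eq_self v ⟨1, by omega⟩).symm

lemma dist_eq_two_iff (V : Type*) (G : SimpleGraph V) (v u : V) :
    G.dist v u = 2 ↔ v ≠ u ∧ ¬ G.Adj v u ∧ ∃ w, G.Adj v w ∧ G.Adj w u := by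
  constructor
  · intro h
    have hr : G.Reachable v u := Reachable.of_dist_ne_zero (by omega)
    obtain ⟨p, hp⟩ := hr.exists_walk_length_eq_dist
    rw [h] at hp
    refine ⟨?_, ?_, ?_⟩
    · intro he; subst he; rw [SimpleGraph.dist_self] at h; omega
    · intro ha; rw [← SimpleGraph.dist_eq_one_iff_adj] at ha; omega
    · cases p with
      | nil => simp at hp
      | cons h1 q =>
        cases q with
        | nil => simp at hp
        | cons h2 r =>
          cases r with
          | nil => exact ⟨_, h1, h2⟩
          | cons h3 s => simp [SimpleGraph.Walk.length_cons] at hp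
  · rintro ⟨hne, hna, w, h1, h2⟩
    have hle : G.dist v u ≤ 2 := by
      have := SimpleGraph.dist_le (SimpleGraph.Walk.cons h1 (SimpleGraph.Walk.cons h2 SimpleGraph.Walk.nil))
      simpa using this
    have h0 : G.dist v u ≠ 0 := by
      rw [ne_eq, SimpleGraph.dist_eq_zero_iff_eq_or_not_reachable]
      push_neg
      exact ⟨hne, ⟨SimpleGraph.Walk.cons h1 (SimpleGraph.Walk.cons h2 SimpleGraph.Walk.nil)⟩⟩
    have hone : G.dist v u ≠ 1 := by
      rw [ne_eq, SimpleGraph.dist_eq_one_iff_adj]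
      exact hna
    omega

end DTD2

namespace DTD3
open DTD DTD2

variable {n : ℕ}

lemma cast_ne_cast [NeZero n] {a b : ℕ} (ha : a < n) (hb : b < n) (hab : a ≠ b) :
    (a : Fin n) ≠ (b : Fin n) := by
  intro h
  rw [cast_eq_iff, Nat.mod_eq_of_lt ha, Nat.mod_eq_of_lt hb] at h
  exact hab h

lemma add_cast_ne [NeZero n] (v : Fin n) {a b : ℕ} (ha : a < n) (hb : b < n) (hab : a ≠ b) :
    v + (a : Fin n) ≠ v + (b : Fin n) := by
  intro h
  rw [add_right_inj] at h
  exact cast_ne_cast ha hb hab h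

lemma cycle_dist_two [NeZero n] (hn : 5 ≤ n) (v u : Fin n) :
    (cycleG n).dist v u = 2 ↔ u = v + ((2:ℕ) : Fin n) ∨ u = v + ((n - 2 : ℕ) : Fin n) := by
  have h3 : 3 ≤ n := by omega
  rw [dist_eq_two_iff]
  constructor
  · rintro ⟨hne, _, w, h1, h2⟩
    rw [adj_iff h3] at h1 h2
    rcases h1 with rfl | rfl <;> rcases h2 with rfl | rfl
    · left; rw [addadd]
    · exfalso; rw [addadd] at hne; exact hne.symm (add_cast_eq_self v ⟨1, by omega⟩) |>.elim
    · exfalso; rw [addadd] at hne; exact hne.symm (add_cast_eq_self v ⟨1, by omega⟩) |>.elim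
    · right; rw [addadd]; rw [add_cast_eq_iff]; exact mod_helper ⟨1, by omega⟩
  · have hne2 : v ≠ v + ((2:ℕ) : Fin n) := (add_cast_ne_self v (by omega) (by omega)).symm
    have hnen2 : v ≠ v + ((n-2:ℕ) : Fin n) := (add_cast_ne_self v (by omega) (by omega)).symm
    rintro (rfl | rfl)
    · refine ⟨hne2, ?_, v + ((1:ℕ) : Fin n), (adj_iff h3 _ _).mpr (Or.inl rfl), ?_⟩
      · rw [adj_iff h3]
        push_neg
        exact ⟨add_cast_ne v (by omega) (by omega) (by omega),
               add_cast_ne v (by omega) (by omega) (by omega)⟩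
      · rw [adj_iff h3]
        left; rw [addadd]
    · refine ⟨hnen2, ?_, v + ((n-1:ℕ) : Fin n), (adj_iff h3 _ _).mpr (Or.inr rfl), ?_⟩
      · rw [adj_iff h3]
        push_neg
        exact ⟨add_cast_ne v (by omega) (by omega) (by omega),
               add_cast_ne v (by omega) (by omega) (by omega)⟩
      · rw [adj_iff h3]
        right; rw [addadd, add_cast_eq_iff]
        exact (mod_helper (n := n) (a := (n-1)+(n-1)) (b := n-2) ⟨1, by omega⟩).symm

def P (n : ℕ) [NeZero n] (S : Finset (Fin n)) : Prop :=
  ∀ v : Fin n, v + ((1:ℕ) : Fin n) ∈ S ∨ v + ((n-1:ℕ) : Fin n) ∈ S ∨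
    (v + ((2:ℕ) : Fin n) ∈ S ∧ v + ((n-2:ℕ) : Fin n) ∈ S)

lemma isDTD_iff_P [NeZero n] (hn : 5 ≤ n) (S : Finset (Fin n)) :
    IsDTDSet (cycleG n) S ↔ P n S := by
  have h3 : 3 ≤ n := by omega
  unfold IsDTDSet P
  apply forall_congr'
  intro v
  have hA : (∃ u ∈ S, (cycleG n).Adj v u) ↔
      (v + ((1:ℕ) : Fin n) ∈ S ∨ v + ((n-1:ℕ) : Fin n) ∈ S) := by
    constructor
    · rintro ⟨u, hu, ha⟩
      rcases (adj_iff h3 v u).mp ha with rfl | rfl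
      · exact Or.inl hu
      · exact Or.inr hu
    · rintro (h | h)
      · exact ⟨_, h, (adj_iff h3 _ _).mpr (Or.inl rfl)⟩
      · exact ⟨_, h, (adj_iff h3 _ _).mpr (Or.inr rfl)⟩
  have hB : (∃ u ∈ S, ∃ w ∈ S, u ≠ w ∧ (cycleG n).dist v u = 2 ∧ (cycleG n).dist v w = 2) ↔
      (v + ((2:ℕ) : Fin n) ∈ S ∧ v + ((n-2:ℕ) : Fin n) ∈ S) := by
    constructor
    · rintro ⟨u, hu, w, hw, huw, hdu, hdw⟩
      rcases (cycle_dist_two hn v u).mp hdu with rfl | rfl <;>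
        rcases (cycle_dist_two hn v w).mp hdw with rfl | rfl
      · exact absurd rfl huw
      · exact ⟨hu, hw⟩
      · exact ⟨hw, hu⟩
      · exact absurd rfl huw
    · rintro ⟨h1, h2⟩
      exact ⟨_, h1, _, h2, add_cast_ne v (by omega) (by omega) (by omega),
        (cycle_dist_two hn v _).mpr (Or.inl rfl), (cycle_dist_two hn v _).mpr (Or.inr rfl)⟩
  rw [hA, hB]
  tauto

end DTD3

namespace DTD4
open DTD DTD2 DTD3

variable {n : ℕ}

def S0 (n : ℕ) : Finset (Fin n) := univ.filter (fun j => (j : ℕ) % 5 ≤ 1)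

lemma mem_S0 (j : Fin n) : j ∈ S0 n ↔ (j : ℕ) % 5 ≤ 1 := by
  simp [S0]

lemma range_count : ∀ N : ℕ, ((Finset.range N).filter (fun j => j % 5 ≤ 1)).card
    = 2 * (N / 5) + min (N % 5) 2 := by
  intro N
  induction N with
  | zero => simp
  | succ N ih =>
    rw [Finset.range_add_one, Finset.filter_insert]
    by_cases h : N % 5 ≤ 1
    · rw [if_pos h, Finset.card_insert_of_notMem (by simp)]
      omega
    · rw [if_neg h]
      omega

lemma S0_card : (S0 n).card = 2 * (n / 5) + min (n % 5) 2 := by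
  rw [← range_count n]
  apply Finset.card_bij (fun (a : Fin n) _ => (a : ℕ))
  · intro a ha
    simp only [Finset.mem_filter, Finset.mem_range]
    exact ⟨a.isLt, (mem_S0 a).mp ha⟩
  · intro a _ b _ h
    exact Fin.ext h
  · intro b hb
    simp only [Finset.mem_filter, Finset.mem_range] at hb
    exact ⟨⟨b, hb.1⟩, (mem_S0 _).mpr hb.2, rfl⟩

lemma nat_key (hn : 5 ≤ n) (j : ℕ) (hj : j < n) :
    ((j+1) % n) % 5 ≤ 1 ∨ ((j+(n-1)) % n) % 5 ≤ 1 ∨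
      (((j+2) % n) % 5 ≤ 1 ∧ ((j+(n-2)) % n) % 5 ≤ 1) := by
  have h1 : ((j+1) % n = j+1 ∧ j+1 < n) ∨ ((j+1) % n = 0 ∧ j+1 = n) := by
    rcases Nat.lt_or_ge (j+1) n with h | h
    · exact Or.inl ⟨Nat.mod_eq_of_lt h, h⟩
    · have he : j + 1 = n := by omega
      exact Or.inr ⟨by rw [he, Nat.mod_self], he⟩
  have h2 : ((j+(n-1)) % n = n-1 ∧ j = 0) ∨ ((j+(n-1)) % n = j-1 ∧ 1 ≤ j) := by
    rcases Nat.eq_zero_or_pos j with rfl | h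
    · exact Or.inl ⟨by rw [Nat.zero_add, Nat.mod_eq_of_lt (by omega)], rfl⟩
    · refine Or.inr ⟨?_, h⟩
      have he : j + (n-1) = (j-1) + n * 1 := by omega
      rw [he, Nat.add_mul_mod_self_left, Nat.mod_eq_of_lt (by omega)]
  have h3 : ((j+2) % n = j+2 ∧ j+2 < n) ∨ ((j+2) % n = 0 ∧ j+2 = n) ∨
      ((j+2) % n = 1 ∧ j+1 = n) := by
    rcases Nat.lt_or_ge (j+2) n with h | h
    · exact Or.inl ⟨Nat.mod_eq_of_lt h, h⟩
    · rcases Nat.lt_or_ge (j+1) n with h' | h'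
      · have he : j + 2 = n := by omega
        exact Or.inr (Or.inl ⟨by rw [he, Nat.mod_self], he⟩)
      · have he : j + 1 = n := by omega
        refine Or.inr (Or.inr ⟨?_, he⟩)
        have he2 : j + 2 = 1 + n * 1 := by omega
        rw [he2, Nat.add_mul_mod_self_left, Nat.mod_eq_of_lt (by omega)]
  have h4 : ((j+(n-2)) % n = j+(n-2) ∧ j ≤ 1) ∨ ((j+(n-2)) % n = j-2 ∧ 2 ≤ j) := by
    rcases Nat.lt_or_ge j 2 with h | h
    · exact Or.inl ⟨Nat.mod_eq_of_lt (by omega), by omega⟩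
    · refine Or.inr ⟨?_, h⟩
      have he : j + (n-2) = (j-2) + n * 1 := by omega
      rw [he, Nat.add_mul_mod_self_left, Nat.mod_eq_of_lt (by omega)]
  rcases h1 with ⟨e1, c1⟩ | ⟨e1, c1⟩ <;> rcases h2 with ⟨e2, c2⟩ | ⟨e2, c2⟩ <;>
    rcases h3 with ⟨e3, c3⟩ | ⟨e3, c3⟩ | ⟨e3, c3⟩ <;> rcases h4 with ⟨e4, c4⟩ | ⟨e4, c4⟩ <;>
    rw [e1, e2, e3, e4] <;> omega

lemma P_S0 [NeZero n] (hn : 5 ≤ n) : P n (S0 n) := by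
  intro v
  have hval : ∀ a : ℕ, a < n → ((v + (a : Fin n) : Fin n) : ℕ) = ((v : ℕ) + a) % n := by
    intro a ha
    rw [Fin.val_add, Fin.val_natCast, Nat.mod_eq_of_lt ha]
  simp only [mem_S0]
  rw [hval 1 (by omega), hval (n-1) (by omega), hval 2 (by omega), hval (n-2) (by omega)]
  exact nat_key hn v.val v.isLt

end DTD4

namespace DTD5
open DTD DTD2 DTD3

variable {n : ℕ} [NeZero n]

def W (v : Fin n) : Finset (Fin n) := (Finset.range 5).image (fun i : ℕ => v + (i : Fin n))

lemma mem_W_of (v : Fin n) {a : ℕ} (ha : a < 5) : v + (a : Fin n) ∈ W v :=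
  Finset.mem_image.mpr ⟨a, Finset.mem_range.mpr ha, rfl⟩

lemma pair_le (hn : 5 ≤ n) {S : Finset (Fin n)} {v : Fin n} {a b : ℕ} (ha5 : a < 5) (hb5 : b < 5)
    (hab : a ≠ b) (haS : v + (a : Fin n) ∈ S) (hbS : v + (b : Fin n) ∈ S) :
    2 ≤ (S ∩ W v).card := by
  rw [show (2 : ℕ) = 1 + 1 from rfl, ← Nat.lt_iff_add_one_le]
  exact Finset.one_lt_card.mpr ⟨v + (a : Fin n), Finset.mem_inter.mpr ⟨haS, mem_W_of v ha5⟩,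
    v + (b : Fin n), Finset.mem_inter.mpr ⟨hbS, mem_W_of v hb5⟩,
    add_cast_ne v (by omega) (by omega) hab⟩

lemma claimA (hn : 5 ≤ n) {S : Finset (Fin n)} (hP : P n S) (v : Fin n) :
    2 ≤ (S ∩ W v).card := by
  -- rewrite offsets: apply P at v+2
  have e1 : ∀ w : Fin n, ∀ a b c : ℕ, (∃ k, a + b = c + n * k) → w + (a : Fin n) + (b : Fin n) = w + (c : Fin n) := by
    intro w a b c h
    rw [addadd]
    congr 1
    exact cast_reduce h
  have h2 := hP (v + ((2:ℕ) : Fin n))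
  rw [e1 v 2 1 3 ⟨0, by omega⟩, e1 v 2 (n-1) 1 ⟨1, by omega⟩, e1 v 2 2 4 ⟨0, by omega⟩,
      e1 v 2 (n-2) 0 ⟨1, by omega⟩] at h2
  rcases h2 with h2 | h2 | ⟨h2a, h2b⟩
  · -- v+3 ∈ S
    have h1 := hP (v + ((1:ℕ) : Fin n))
    rw [e1 v 1 1 2 ⟨0, by omega⟩, e1 v 1 (n-1) 0 ⟨1, by omega⟩, e1 v 1 2 3 ⟨0, by omega⟩,
        e1 v 1 (n-2) (n-1) ⟨0, by omega⟩] at h1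
    rcases h1 with h1 | h1 | ⟨h1a, h1b⟩
    · exact pair_le hn (by omega) (by omega) (by omega) h1 h2
    · rw [add_cast_zero] at h1
      have : v + ((0:ℕ) : Fin n) ∈ S := by rw [add_cast_zero]; exact h1
      exact pair_le hn (by omega) (by omega) (by omega) this h2
    · -- h1a : v+3 ∈ S (nothing new); use P at v+3
      have h3 := hP (v + ((3:ℕ) : Fin n))
      rw [e1 v 3 1 4 ⟨0, by omega⟩, e1 v 3 (n-1) 2 ⟨1, by omega⟩, e1 v 3 2 5 ⟨0, by omega⟩,
          e1 v 3 (n-2) 1 ⟨1, by omega⟩] at h3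
      rcases h3 with h3 | h3 | ⟨h3a, h3b⟩
      · exact pair_le hn (by omega) (by omega) (by omega) h2 h3
      · exact pair_le hn (by omega) (by omega) (by omega) h2 h3
      · exact pair_le hn (by omega) (by omega) (by omega) h3b h2
  · -- v+1 ∈ S
    have h3 := hP (v + ((3:ℕ) : Fin n))
    rw [e1 v 3 1 4 ⟨0, by omega⟩, e1 v 3 (n-1) 2 ⟨1, by omega⟩, e1 v 3 2 5 ⟨0, by omega⟩,
        e1 v 3 (n-2) 1 ⟨1, by omega⟩] at h3
    rcases h3 with h3 | h3 | ⟨h3a, h3b⟩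
    · exact pair_le hn (by omega) (by omega) (by omega) h2 h3
    · exact pair_le hn (by omega) (by omega) (by omega) h2 h3
    · -- nothing new: use P at v+1
      have h1 := hP (v + ((1:ℕ) : Fin n))
      rw [e1 v 1 1 2 ⟨0, by omega⟩, e1 v 1 (n-1) 0 ⟨1, by omega⟩, e1 v 1 2 3 ⟨0, by omega⟩,
          e1 v 1 (n-2) (n-1) ⟨0, by omega⟩] at h1
      rcases h1 with h1 | h1 | ⟨h1a, h1b⟩
      · exact pair_le hn (by omega) (by omega) (by omega) h2 h1
      · have h0 : v + ((0:ℕ) : Fin n) ∈ S := h1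
        exact pair_le hn (by omega) (by omega) (by omega) h2 h0
      · exact pair_le hn (by omega) (by omega) (by omega) h2 h1a
  · -- v+4 ∈ S and v ∈ S
    have : v + ((0:ℕ) : Fin n) ∈ S := by rw [add_cast_zero]; rw [add_cast_zero] at h2b; exact h2b
    exact pair_le hn (by omega) (by omega) (by omega) this h2a

lemma card_W_filter (hn : 5 ≤ n) (u : Fin n) :
    (univ.filter (fun v : Fin n => u ∈ W v)).card = 5 := by
  have : univ.filter (fun v : Fin n => u ∈ W v) = (Finset.range 5).image (fun i => u + ((n - i : ℕ) : Fin n)) := by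
    ext x
    simp only [Finset.mem_filter, Finset.mem_univ, true_and, Finset.mem_image, W,
      Finset.mem_range]
    constructor
    · rintro ⟨i, hi, hx⟩
      refine ⟨i, hi, ?_⟩
      rw [← hx, addadd]
      exact add_cast_eq_self x ⟨1, by omega⟩
    · rintro ⟨i, hi, rfl⟩
      refine ⟨i, hi, ?_⟩
      rw [addadd]
      exact add_cast_eq_self u ⟨1, by omega⟩
  rw [this, Finset.card_image_of_injOn, Finset.card_range]
  intro i hi j hj h
  simp only [Finset.mem_coe, Finset.mem_range] at hi hj
  rw [add_cast_eq_iff] at h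
  have hi' : (n - i) % n = if i = 0 then 0 else n - i := by
    rcases Nat.eq_zero_or_pos i with rfl | h'
    · simp
    · rw [if_neg (by omega), Nat.mod_eq_of_lt (by omega)]
  have hj' : (n - j) % n = if j = 0 then 0 else n - j := by
    rcases Nat.eq_zero_or_pos j with rfl | h'
    · simp
    · rw [if_neg (by omega), Nat.mod_eq_of_lt (by omega)]
  rw [hi', hj'] at h
  split_ifs at h <;> omega

lemma sum_card (hn : 5 ≤ n) (S : Finset (Fin n)) :
    ∑ v : Fin n, (S ∩ W v).card = 5 * S.card := by
  have h1 : ∀ v : Fin n, (S ∩ W v).card = ∑ u ∈ S, if u ∈ W v then 1 else 0 := by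
    intro v
    rw [← Finset.filter_mem_eq_inter, Finset.card_filter]
  calc ∑ v : Fin n, (S ∩ W v).card = ∑ v : Fin n, ∑ u ∈ S, if u ∈ W v then 1 else 0 := by
        exact Finset.sum_congr rfl (fun v _ => h1 v)
    _ = ∑ u ∈ S, ∑ v : Fin n, if u ∈ W v then 1 else 0 := Finset.sum_comm
    _ = ∑ u ∈ S, (univ.filter (fun v : Fin n => u ∈ W v)).card := by
        exact Finset.sum_congr rfl (fun u _ => by rw [Finset.card_filter])
    _ = ∑ _u ∈ S, 5 := Finset.sum_congr rfl (fun u _ => card_W_filter hn u)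
    _ = 5 * S.card := by rw [Finset.sum_const, smul_eq_mul, mul_comm]

end DTD5

namespace DTD6
open DTD DTD2 DTD3 DTD5

variable {n : ℕ} [NeZero n]

lemma lower1 (hn : 5 ≤ n) {S : Finset (Fin n)} (hP : P n S) : 2 * n ≤ 5 * S.card := by
  have h1 : ∑ v : Fin n, 2 ≤ ∑ v : Fin n, (S ∩ W v).card :=
    Finset.sum_le_sum (fun v _ => claimA hn hP v)
  rw [sum_card hn] at h1
  simpa [mul_comm] using h1

lemma lower2 (m : ℕ) (hm : 1 ≤ m) (hn : n = 5 * m + 2) {S : Finset (Fin n)} (hP : P n S) :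
    S.card ≠ 2 * m + 1 := by
  intro hcard
  have hn5 : 5 ≤ n := by omega
  set f : Fin n → ℕ := fun v => (S ∩ W v).card with hf
  have hsum : ∑ v : Fin n, f v = 10 * m + 5 := by
    rw [hf]; rw [sum_card hn5, hcard]; ring
  have hge : ∀ v : Fin n, 2 ≤ f v := fun v => claimA hn5 hP v
  -- extract unique defect v0
  have hcardn : (univ : Finset (Fin n)).card = n := by simp
  have hsum2 : ∑ v : Fin n, (f v - 2) = 1 := by
    have : ∑ v : Fin n, f v = ∑ v : Fin n, ((f v - 2) + 2) :=
      Finset.sum_congr rfl (fun v _ => by have := hge v; omega)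
    rw [this, Finset.sum_add_distrib, Finset.sum_const, hcardn, smul_eq_mul] at hsum
    omega
  obtain ⟨v0, hv0⟩ : ∃ v0 : Fin n, f v0 - 2 ≠ 0 := by
    by_contra h
    push_neg at h
    rw [Finset.sum_eq_zero (fun v _ => h v)] at hsum2
    omega
  have hothers : ∀ v : Fin n, v ≠ v0 → f v = 2 := by
    intro v hv
    by_contra h
    have h1 : 1 ≤ f v - 2 := by have := hge v; omega
    have h2 : 1 ≤ f v0 - 2 := by omega
    have hsub : ({v, v0} : Finset (Fin n)) ⊆ univ := Finset.subset_univ _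
    have := Finset.sum_le_sum_of_subset (f := fun v => f v - 2) hsub
    rw [Finset.sum_pair hv, hsum2] at this
    omega
  have hv03 : f v0 = 3 := by
    have h1 : ∑ v : Fin n, (f v - 2) = f v0 - 2 :=
      Finset.sum_eq_single_of_mem v0 (Finset.mem_univ v0)
        (fun b _ hb => by simp [hothers b hb])
    have := hge v0
    omega
  clear hv0 hsum hsum2
  have hn6 : 7 ≤ n := by omega
  -- the step relation
  set χ : Fin n → ℕ := fun x => if x ∈ S then 1 else 0 with hχ
  have hWstep : ∀ v : Fin n, W v ∪ {v + ((5:ℕ) : Fin n)} =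
      W (v + ((1:ℕ) : Fin n)) ∪ {v} := by
    intro v
    have hA : ∀ x : Fin n, x ∈ W v ∪ {v + ((5:ℕ) : Fin n)} ↔ ∃ j < 6, v + ((j:ℕ) : Fin n) = x := by
      intro x
      simp only [Finset.mem_union, Finset.mem_singleton, W, Finset.mem_image, Finset.mem_range]
      constructor
      · rintro (⟨i, hi, rfl⟩ | rfl)
        · exact ⟨i, by omega, rfl⟩
        · exact ⟨5, by omega, rfl⟩
      · rintro ⟨j, hj, rfl⟩
        rcases Nat.lt_or_ge j 5 with h | h
        · exact Or.inl ⟨j, h, rfl⟩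
        · right
          have hj5 : j = 5 := by omega
          rw [hj5]
    have hB : ∀ x : Fin n, x ∈ W (v + ((1:ℕ) : Fin n)) ∪ {v} ↔ ∃ j < 6, v + ((j:ℕ) : Fin n) = x := by
      intro x
      simp only [Finset.mem_union, Finset.mem_singleton, W, Finset.mem_image, Finset.mem_range]
      constructor
      · rintro (⟨i, hi, rfl⟩ | hx)
        · exact ⟨1 + i, by omega, by rw [addadd]⟩
        · exact ⟨0, by omega, (add_cast_zero v).trans hx.symm⟩
      · rintro ⟨j, hj, rfl⟩
        rcases Nat.eq_zero_or_pos j with rfl | h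
        · exact Or.inr (add_cast_zero v)
        · left
          refine ⟨j - 1, by omega, ?_⟩
          rw [addadd]
          congr 2
          omega
    ext x
    rw [hA, hB]
  have hnotmem1 : ∀ v : Fin n, v + ((5:ℕ) : Fin n) ∉ W v := by
    intro v hv
    rw [W, Finset.mem_image] at hv
    obtain ⟨i, hi, h⟩ := hv
    rw [Finset.mem_range] at hi
    exact add_cast_ne v (by omega) (by omega) (by omega) h
  have hnotmem2 : ∀ v : Fin n, v ∉ W (v + ((1:ℕ) : Fin n)) := by
    intro v hv
    rw [W, Finset.mem_image] at hv
    obtain ⟨i, hi, h⟩ := hv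
    rw [Finset.mem_range] at hi
    rw [addadd] at h
    exact add_cast_ne v (by omega) (by omega) (by omega) (h.trans (add_cast_zero v).symm)
  have hsingle : ∀ x : Fin n, (S ∩ {x}).card = χ x := by
    intro x
    by_cases h : x ∈ S
    · rw [Finset.inter_comm, Finset.singleton_inter_of_mem h]
      simp [hχ, h]
    · rw [Finset.inter_comm, Finset.singleton_inter_of_notMem h]
      simp [hχ, h]
  have step0 : ∀ v : Fin n, f v + χ (v + ((5:ℕ) : Fin n)) = f (v + ((1:ℕ) : Fin n)) + χ v := by
    intro v
    have c1 : (S ∩ (W v ∪ {v + ((5:ℕ) : Fin n)})).card = f v + χ (v + ((5:ℕ) : Fin n)) := by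
      rw [Finset.inter_union_distrib_left, Finset.card_union_of_disjoint, hsingle]
      rw [Finset.disjoint_left]
      intro x hx1 hx2
      simp only [Finset.mem_inter, Finset.mem_singleton] at hx1 hx2
      exact hnotmem1 v (hx2.2 ▸ hx1.2)
    have c2 : (S ∩ (W (v + ((1:ℕ) : Fin n)) ∪ {v})).card = f (v + ((1:ℕ) : Fin n)) + χ v := by
      rw [Finset.inter_union_distrib_left, Finset.card_union_of_disjoint, hsingle]
      rw [Finset.disjoint_left]
      intro x hx1 hx2
      simp only [Finset.mem_inter, Finset.mem_singleton] at hx1 hx2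
      exact hnotmem2 v (hx2.2 ▸ hx1.2)
    rw [← c1, ← c2, hWstep]
  have hχle : ∀ x : Fin n, χ x ≤ 1 := by
    intro x; simp only [hχ]; split <;> omega
  have hstep : ∀ v : Fin n, v ≠ v0 → v ≠ v0 + ((n-1:ℕ) : Fin n) →
      ((v + ((5:ℕ) : Fin n) ∈ S) ↔ v ∈ S) := by
    intro v h1 h2
    have hv1 : v + ((1:ℕ) : Fin n) ≠ v0 := by
      intro h
      apply h2
      rw [← h, addadd]
      exact (add_cast_eq_self v ⟨1, by omega⟩).symm
    have e := step0 v
    rw [hothers v h1, hothers _ hv1] at e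
    have e2 : χ (v + ((5:ℕ) : Fin n)) = χ v := by omega
    simp only [hχ] at e2
    by_cases hA : v + ((5:ℕ) : Fin n) ∈ S <;> by_cases hB : v ∈ S
    · exact iff_of_true hA hB
    · simp [hB] at e2
      exact absurd (by simpa using hA) e2
    · simp [hB] at e2
      exact absurd e2 (by simpa using hA)
    · exact iff_of_false hA hB
  have hminus : v0 + ((n-1:ℕ) : Fin n) ∉ S := by
    have hvne : v0 + ((n-1:ℕ) : Fin n) ≠ v0 := add_cast_ne_self v0 (by omega) (by omega)
    have hv1 : v0 + ((n-1:ℕ) : Fin n) + ((1:ℕ) : Fin n) = v0 := by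
      rw [addadd]
      exact add_cast_eq_self v0 ⟨1, by omega⟩
    have e := step0 (v0 + ((n-1:ℕ) : Fin n))
    rw [hv1, hv03, hothers _ hvne] at e
    have h5 := hχle (v0 + ((n-1:ℕ) : Fin n) + ((5:ℕ) : Fin n))
    have e2 : χ (v0 + ((n-1:ℕ) : Fin n)) = 0 := by omega
    simp only [hχ] at e2
    intro hmem
    simp [hmem] at e2
  have add_cast_ne2 : ∀ (v : Fin n) (a b : ℕ), b ≤ a → ¬ n ∣ (a - b) →
      v + ((a:ℕ) : Fin n) ≠ v + ((b:ℕ) : Fin n) := by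
    intro v a b hba hdvd h
    rw [add_cast_eq_iff] at h
    exact hdvd ((Nat.modEq_iff_dvd' hba).mp h.symm)
  have hpos : 0 < n := by omega
  have chain : ∀ t : ℕ, ∀ w : Fin n,
      (∀ i, i < t → w + ((5*i : ℕ) : Fin n) ≠ v0 ∧ w + ((5*i : ℕ) : Fin n) ≠ v0 + ((n-1:ℕ) : Fin n)) →
      ((w + ((5*t : ℕ) : Fin n) ∈ S) ↔ w ∈ S) := by
    intro t
    induction t with
    | zero =>
      intro w _
      rw [show 5 * 0 = 0 from rfl, add_cast_zero]
    | succ t ih =>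
      intro w hg
      have h1 := ih w (fun i hi => hg i (by omega))
      have h2 := hstep (w + ((5*t : ℕ) : Fin n)) (hg t (by omega)).1 (hg t (by omega)).2
      rw [addadd] at h2
      rw [show 5 * t + 5 = 5 * (t+1) from by omega] at h2
      rw [h2, h1]
  -- first chain : v0 + 1 ∉ S
  have hchain1 : v0 + ((1:ℕ) : Fin n) ∉ S := by
    have hg : ∀ i, i < m → v0 + ((1:ℕ) : Fin n) + ((5*i : ℕ) : Fin n) ≠ v0 ∧
        v0 + ((1:ℕ) : Fin n) + ((5*i : ℕ) : Fin n) ≠ v0 + ((n-1:ℕ) : Fin n) := by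
      intro i hi
      rw [addadd]
      refine ⟨add_cast_ne_self v0 (by omega) (by omega), ?_⟩
      exact add_cast_ne v0 (by omega) (by omega) (by omega)
    have h := chain m (v0 + ((1:ℕ) : Fin n)) hg
    rw [addadd, show 1 + 5 * m = n - 1 from by omega] at h
    intro hmem
    exact hminus (h.symm.mp hmem)
  -- second chain : v0 + (n-2) ∉ S
  have hchain2 : v0 + ((n-2:ℕ) : Fin n) ∉ S := by
    have hg : ∀ i, i < 2*m+1 → v0 + ((n-2:ℕ) : Fin n) + ((5*i : ℕ) : Fin n) ≠ v0 ∧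
        v0 + ((n-2:ℕ) : Fin n) + ((5*i : ℕ) : Fin n) ≠ v0 + ((n-1:ℕ) : Fin n) := by
      intro i hi
      rw [addadd]
      constructor
      · intro h
        have h' : v0 + ((n - 2 + 5*i : ℕ) : Fin n) = v0 + ((0 : ℕ) : Fin n) :=
          h.trans (add_cast_zero v0).symm
        exact add_cast_ne2 v0 (n - 2 + 5*i) 0 (by omega)
          (by rw [Nat.sub_zero]
              exact not_dvd_helper hpos (by omega) (by omega) (by omega) (by omega)) h'
      · rcases Nat.eq_zero_or_pos i with rfl | hipos
        · rw [show n - 2 + 5 * 0 = n - 2 from by omega]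
          exact add_cast_ne v0 (by omega) (by omega) (by omega)
        · apply add_cast_ne2 v0 _ _ (by omega)
          apply not_dvd_helper hpos (by omega) (by omega) (by omega) (by omega)
    have h := chain (2*m+1) (v0 + ((n-2:ℕ) : Fin n)) hg
    rw [addadd] at h
    rw [show v0 + (((n-2) + 5 * (2*m+1) : ℕ) : Fin n) = v0 + ((n-1 : ℕ) : Fin n) from by
      rw [add_cast_eq_iff]; exact mod_helper ⟨2, by omega⟩] at h
    intro hmem
    exact hminus (h.symm.mp hmem)
  -- final contradiction via P at v0
  rcases hP v0 with h | h | ⟨h, h'⟩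
  · exact hchain1 h
  · exact hminus h
  · exact hchain2 h'

end DTD6

namespace DTD7
open DTD DTD2 DTD3 DTD4 DTD5 DTD6

variable {n : ℕ}

lemma two_le (hn3 : 3 ≤ n) {S : Finset (Fin n)} (h : IsDTDSet (cycleG n) S) : 2 ≤ S.card := by
  by_contra hlt
  push_neg at hlt
  interval_cases hc : S.card
  · rw [Finset.card_eq_zero] at hc
    subst hc
    rcases h ⟨0, by omega⟩ with ⟨u, hu, _⟩ | ⟨u, hu, _⟩ <;> simp at hu
  · rw [Finset.card_eq_one] at hc
    obtain ⟨a, rfl⟩ := hc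
    rcases h a with ⟨u, hu, hadj⟩ | ⟨u, hu, w, hw, huw, _⟩
    · rw [Finset.mem_singleton] at hu
      subst hu
      exact (cycleG n).irrefl hadj
    · rw [Finset.mem_singleton] at hu hw
      subst hu; subst hw
      exact huw rfl

lemma isDTD_S0_3 : IsDTDSet (cycleG 3) (S0 3) := by
  intro v
  left
  have hall : ∀ w : Fin 3, w + ((1:ℕ) : Fin 3) ∈ S0 3 ∨ w + ((3-1:ℕ) : Fin 3) ∈ S0 3 := by decide
  rcases hall v with h | h
  · exact ⟨_, h, (adj_iff (by omega) _ _).mpr (Or.inl rfl)⟩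
  · exact ⟨_, h, (adj_iff (by omega) _ _).mpr (Or.inr rfl)⟩

lemma isDTD_S0_4 : IsDTDSet (cycleG 4) (S0 4) := by
  intro v
  left
  have hall : ∀ w : Fin 4, w + ((1:ℕ) : Fin 4) ∈ S0 4 ∨ w + ((4-1:ℕ) : Fin 4) ∈ S0 4 := by decide
  rcases hall v with h | h
  · exact ⟨_, h, (adj_iff (by omega) _ _).mpr (Or.inl rfl)⟩
  · exact ⟨_, h, (adj_iff (by omega) _ _).mpr (Or.inr rfl)⟩

end DTD7

/-- The disjunctive total domination number of the cycle C_n. -/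
theorem dtd_cycle (n : ℕ) (hn : 3 ≤ n) :
    dtdNum (cycleG n) =
      if n % 5 = 0 then 2 * n / 5 else (2 * (n + 1) + 4) / 5 := by
  haveI : NeZero n := ⟨by omega⟩
  set t := if n % 5 = 0 then 2 * n / 5 else (2 * (n + 1) + 4) / 5 with ht
  have htval : t = 2 * (n / 5) + min (n % 5) 2 := by
    rw [ht]; split_ifs with h <;> omega
  have hS0card : (DTD4.S0 n).card = t := by rw [DTD4.S0_card, htval]
  have hmem : t ∈ {k | ∃ S : Finset (Fin n), IsDTDSet (cycleG n) S ∧ S.card = k} := by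
    rcases Nat.lt_or_ge n 5 with h5 | h5
    · interval_cases n
      · exact ⟨DTD4.S0 3, DTD7.isDTD_S0_3, hS0card⟩
      · exact ⟨DTD4.S0 4, DTD7.isDTD_S0_4, hS0card⟩
    · exact ⟨DTD4.S0 n, (DTD3.isDTD_iff_P h5 _).mpr (DTD4.P_S0 h5), hS0card⟩
  rw [dtdNum]
  apply le_antisymm
  · exact Nat.sInf_le hmem
  · apply le_csInf ⟨t, hmem⟩
    rintro k ⟨S, hS, rfl⟩
    rcases Nat.lt_or_ge n 5 with h5 | h5
    · have h2 := DTD7.two_le hn hS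
      have : t = 2 := by interval_cases n <;> simp [ht]
      omega
    · have hP := (DTD3.isDTD_iff_P h5 S).mp hS
      have h1 := DTD6.lower1 h5 hP
      by_cases hmod : n % 5 = 2
      · have hm : n = 5 * (n / 5) + 2 := by omega
        have hm1 : 1 ≤ n / 5 := by omega
        have hne := DTD6.lower2 (n / 5) hm1 hm hP
        omega
      · omega
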